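/- Let E be a real inner product space, C ⊆ E a convex open set, Φ : E → ℝ convex on C and differentiable on C with gradient ∇Φ, K ⊆ C a convex set, and y ∈ C. If x* ∈ K minimizes the function x ↦ D_Φ(x, y) over K, then for every x ∈ K the generalized Pythagorean inequality holds: D_Φ(x, x*) + D_Φ(x*, y) ≤ D_Φ(x, y). -/

import Mathlib

open scoped RealInnerProductSpace

/-- generalized Pythagorean inequality for Bregman projections:
if `x*` minimizes `x ↦ D_Φ(x, y)` over a convex set `K ⊆ C`, then for every
`x ∈ K`, `D_Φ(x, x*) + D_Φ(x*, y) ≤ D_Φ(x, y)`. -/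
theorem stmt_11 {E : Type*} [NormedAddCommGroup E] [InnerProductSpace ℝ E]
    (C : Set E) (hC : Convex ℝ C) (hCopen : IsOpen C)
    (Φ : E → ℝ) (gradΦ : E → E)
    (hconv : ConvexOn ℝ C Φ)
    (hdiff : ∀ x ∈ C, HasFDerivAt Φ (innerSL ℝ (gradΦ x)) x)
    (D : E → E → ℝ) (hD : ∀ p q, D p q = Φ p - Φ q - ⟪gradΦ q, p - q⟫)
    (K : Set E) (hK : Convex ℝ K) (hKC : K ⊆ C)
    (y : E) (hy : y ∈ C)
    (xstar : E) (hxstar : xstar ∈ K)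
    (hmin : IsMinOn (fun x => D x y) K xstar) :
    ∀ x ∈ K, D x xstar + D xstar y ≤ D x y := by
  intro x hx
  -- key: 0 ≤ ⟪gradΦ xstar - gradΦ y, x - xstar⟫
  have hf : HasFDerivAt (fun z => D z y)
      (innerSL ℝ (gradΦ xstar) - innerSL ℝ (gradΦ y)) xstar := by
    have h1 : HasFDerivAt Φ (innerSL ℝ (gradΦ xstar)) xstar := hdiff _ (hKC hxstar)
    have h2 : HasFDerivAt (fun z : E => Φ y - ⟪gradΦ y, y⟫ + ⟪gradΦ y, z⟫)
        (innerSL ℝ (gradΦ y)) xstar :=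
      ((innerSL ℝ (gradΦ y)).hasFDerivAt).const_add _
    have := h1.sub h2
    refine this.congr_of_eventuallyEq (Filter.Eventually.of_forall fun z => ?_)
    show D z y = Φ z - (Φ y - ⟪gradΦ y, y⟫ + ⟪gradΦ y, z⟫)
    rw [hD, inner_sub_right]
    ring
  have hcone : x - xstar ∈ posTangentConeAt K xstar :=
    sub_mem_posTangentConeAt_of_segment_subset (hK.segment_subset hxstar hx)
  have hlocal : IsLocalMinOn (fun z => D z y) K xstar :=
    hmin.localize
  have hkey : (0:ℝ) ≤ (innerSL ℝ (gradΦ xstar) - innerSL ℝ (gradΦ y)) (x - xstar) :=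
    hlocal.hasFDerivWithinAt_nonneg hf.hasFDerivWithinAt hcone
  simp only [ContinuousLinearMap.sub_apply, innerSL_apply_apply] at hkey
  rw [hD, hD, hD]
  have : ⟪gradΦ y, x - y⟫ = ⟪gradΦ y, x - xstar⟫ + ⟪gradΦ y, xstar - y⟫ := by
    rw [← inner_add_right]; congr 1; abel
  rw [this]
  nlinarith [hkey]
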